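/- For every x > 0 and every y ∈ ℝ one has the pointwise bounds 1_{{y ≤ −x}} e^{λ₁(x)(x+y)} + 1_{{y ≥ x}} e^{λ₁(x)(x−y)} ≤ ψ_{x,1}(y) ≤ e^{−λ₁(x)|x+y|} + e^{−λ₁(x)|y−x|}; consequently there exist constants 0 < c ≤ C < ∞, independent of x, such that c ≤ (∫_ℝ |ψ_{x,1}(y)|² dy)^{1/2} ≤ C for all x > 0. -/

import Mathlib

open Real MeasureTheory

lemma intOn_exp_Ioi' {b : ℝ} (hb : 0 < b) (a : ℝ) :
    IntegrableOn (fun y : ℝ => Real.exp (-(b * y))) (Set.Ioi a) := by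
  simpa [neg_mul] using exp_neg_integrableOn_Ioi a hb

lemma int_exp_Ioi' {b : ℝ} (hb : 0 < b) (a : ℝ) :
    ∫ y in Set.Ioi a, Real.exp (-(b * y)) = Real.exp (-(b * a)) / b := by
  have h := integral_comp_mul_left_Ioi (fun u : ℝ => Real.exp (-u)) a hb
  simp only [smul_eq_mul] at h
  rw [h, integral_exp_neg_Ioi]
  ring

lemma intOn_exp_Iic' {b : ℝ} (hb : 0 < b) (a : ℝ) :
    IntegrableOn (fun y : ℝ => Real.exp (b * y)) (Set.Iic a) := by
  have h_int : IntegrableOn (fun y : ℝ => Real.exp (-(b * y))) (Set.Ici (-a)) :=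
    Iff.mpr integrableOn_Ici_iff_integrableOn_Ioi (intOn_exp_Ioi' hb (-a))
  have h_map_neg : (volume.restrict (Set.Ici (-a))).map Neg.neg
      = (volume : Measure ℝ).restrict (Set.Iic a) := by
    conv_rhs => rw [← Measure.map_neg_eq_self (volume : Measure ℝ),
      measurableEmbedding_neg.restrict_map]
    simp
  rw [IntegrableOn, ← h_map_neg, measurableEmbedding_neg.integrable_map_iff]
  simpa [Function.comp_def, mul_neg, IntegrableOn] using h_int

lemma int_exp_Iic' {b : ℝ} (hb : 0 < b) (a : ℝ) :
    ∫ y in Set.Iic a, Real.exp (b * y) = Real.exp (b * a) / b := by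
  have h := integral_comp_neg_Iic a (fun t : ℝ => Real.exp (-(b * t)))
  rw [int_exp_Ioi' hb] at h
  simp only [mul_neg, neg_neg] at h
  rw [h]

lemma cosh_div_le (l x y : ℝ) :
    Real.cosh (l * y) / Real.cosh (l * x)
      ≤ Real.exp (-(l * (x - y))) + Real.exp (-(l * (x + y))) := by
  rw [div_le_iff₀ (Real.cosh_pos _)]
  have eA : Real.exp (-(l * (x - y))) * Real.exp (l * x) = Real.exp (l * y) := by
    rw [← Real.exp_add]; congr 1; ring
  have eB : Real.exp (-(l * (x + y))) * Real.exp (l * x) = Real.exp (-(l * y)) := by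
    rw [← Real.exp_add]; congr 1; ring
  nlinarith [Real.exp_pos (-(l*x)), Real.exp_pos (-(l*(x-y))), Real.exp_pos (-(l*(x+y))),
    Real.cosh_eq (l*y), Real.cosh_eq (l*x)]

theorem stmt_9 (lam1 : ℝ → ℝ)
    (hlam1 : ∀ x : ℝ, 0 ≤ x → lam1 x ∈ Set.Ioc (1/2 : ℝ) 1 ∧
      (2 * lam1 x - 1) * Real.exp (2 * lam1 x * x) = 1)
    (ψ : ℝ → ℝ → ℝ)
    (hψ1 : ∀ x : ℝ, 0 < x → ∀ y : ℝ, y ≤ -x → ψ x y = Real.exp (lam1 x * (x + y)))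
    (hψ2 : ∀ x : ℝ, 0 < x → ∀ y : ℝ, -x < y → y < x →
      ψ x y = Real.cosh (lam1 x * y) / Real.cosh (lam1 x * x))
    (hψ3 : ∀ x : ℝ, 0 < x → ∀ y : ℝ, x ≤ y → ψ x y = Real.exp (lam1 x * (x - y))) :
    (∀ x : ℝ, 0 < x → ∀ y : ℝ,
      ((if y ≤ -x then Real.exp (lam1 x * (x + y)) else 0)
        + (if x ≤ y then Real.exp (lam1 x * (x - y)) else 0) ≤ ψ x y) ∧
      ψ x y ≤ Real.exp (-(lam1 x) * |x + y|) + Real.exp (-(lam1 x) * |y - x|)) ∧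
    (∃ c C : ℝ, 0 < c ∧ c ≤ C ∧ ∀ x : ℝ, 0 < x →
      c ≤ Real.sqrt (∫ y : ℝ, (ψ x y) ^ 2) ∧
      Real.sqrt (∫ y : ℝ, (ψ x y) ^ 2) ≤ C) := by
  constructor
  ·
      intro x hx y
      obtain ⟨⟨hl1, hl2⟩, -⟩ := hlam1 x hx.le
      have hl0 : 0 < lam1 x := by linarith
      rcases le_or_gt y (-x) with h1 | h1
      · have hxy : x + y ≤ 0 := by linarith
        have hyx : ¬ (x ≤ y) := by intro h; linarith
        rw [hψ1 x hx y h1]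
        constructor
        · rw [if_pos h1, if_neg hyx, add_zero]
        · have h2 : |x + y| = -(x + y) := abs_of_nonpos hxy
          have h3 : -(lam1 x) * |x + y| = lam1 x * (x + y) := by rw [h2]; ring
          rw [h3]
          exact le_add_of_nonneg_right (Real.exp_pos _).le
      · rcases lt_or_ge y x with h2 | h2
        · rw [hψ2 x hx y h1 h2]
          constructor
          · rw [if_neg (not_le.mpr h1), if_neg (not_le.mpr h2), add_zero]
            positivity
          · have ha : |x + y| = x + y := abs_of_pos (by linarith)
            have hb : |y - x| = -(y - x) := abs_of_neg (by linarith)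
            have e1 : -(lam1 x) * |x + y| = -(lam1 x * (x + y)) := by rw [ha]; ring
            have e2 : -(lam1 x) * |y - x| = -(lam1 x * (x - y)) := by rw [hb]; ring
            rw [e1, e2, add_comm]
            exact cosh_div_le _ _ _
        · rw [hψ3 x hx y h2]
          have h3 : ¬ (y ≤ -x) := by intro h; linarith
          constructor
          · rw [if_neg h3, if_pos h2, zero_add]
          · have ha : |y - x| = y - x := abs_of_nonneg (by linarith)
            have e2 : -(lam1 x) * |y - x| = lam1 x * (x - y) := by rw [ha]; ring
            rw [e2]
            exact le_add_of_nonneg_left (Real.exp_pos _).le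
  ·
      refine ⟨Real.exp (-1), 3, Real.exp_pos _, ?_, ?_⟩
      · have h := Real.exp_le_exp.mpr (show (-1:ℝ) ≤ 0 by norm_num)
        rw [Real.exp_zero] at h; linarith
      intro x hx
      obtain ⟨⟨hl1, hl2⟩, -⟩ := hlam1 x hx.le
      have hl0 : 0 < lam1 x := by linarith
      have h2l : 0 < 2 * lam1 x := by linarith
      have hxx : -x ≤ x := by linarith
      set l := lam1 x with hldef
      -- pointwise descriptions of ψ² on pieces
      have hEq1 : Set.EqOn (fun y => (ψ x y)^2)
          (fun y => Real.exp (2*l*x) * Real.exp ((2*l) * y)) (Set.Iic (-x)) := by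
        intro y hy
        simp only
        rw [hψ1 x hx y hy, sq, ← Real.exp_add, ← Real.exp_add]
        congr 1; ring
      have hEq3 : Set.EqOn (fun y => (ψ x y)^2)
          (fun y => Real.exp (2*l*x) * Real.exp (-((2*l) * y))) (Set.Ici x) := by
        intro y hy
        simp only
        rw [hψ3 x hx y hy, sq, ← Real.exp_add, ← Real.exp_add]
        congr 1; ring
      have hEq2 : Set.EqOn (fun y => (ψ x y)^2)
          (fun y => (Real.cosh (l * y) / Real.cosh (l * x))^2) (Set.Icc (-x) x) := by
        intro y hy
        obtain ⟨hy1, hy2⟩ := hy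
        simp only
        rcases le_or_gt y (-x) with h | h
        · have hyx : y = -x := le_antisymm h hy1
          rw [hψ1 x hx y h, hyx, mul_neg, Real.cosh_neg,
            div_self (ne_of_gt (Real.cosh_pos _))]
          norm_num
        · rcases lt_or_ge y x with h' | h'
          · rw [hψ2 x hx y h h']
          · have hyx : y = x := le_antisymm hy2 h'
            rw [hψ3 x hx y h', hyx, div_self (ne_of_gt (Real.cosh_pos _))]
            norm_num
      -- integrability on pieces
      have P1 : IntegrableOn (fun y => (ψ x y)^2) (Set.Iic (-x)) :=
        MeasureTheory.IntegrableOn.congr_fun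
          ((intOn_exp_Iic' h2l (-x)).const_mul (Real.exp (2*l*x)))
          (fun y hy => (hEq1 hy).symm) measurableSet_Iic
      have P3 : IntegrableOn (fun y => (ψ x y)^2) (Set.Ici x) :=
        MeasureTheory.IntegrableOn.congr_fun
          (Iff.mpr integrableOn_Ici_iff_integrableOn_Ioi
            ((intOn_exp_Ioi' h2l x).const_mul (Real.exp (2*l*x))))
          (fun y hy => (hEq3 hy).symm) measurableSet_Ici
      have P2 : IntegrableOn (fun y => (ψ x y)^2) (Set.Icc (-x) x) := by
        refine MeasureTheory.IntegrableOn.congr_fun (Continuous.integrableOn_Icc ?_)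
          (fun y hy => (hEq2 hy).symm) measurableSet_Icc
        exact ((Real.continuous_cosh.comp (continuous_const.mul continuous_id)).div_const _).pow 2
      have P2' : IntegrableOn (fun y => (ψ x y)^2) (Set.Ioc (-x) x) :=
        P2.mono_set Set.Ioc_subset_Icc_self
      have P3' : IntegrableOn (fun y => (ψ x y)^2) (Set.Ioi x) :=
        P3.mono_set Set.Ioi_subset_Ici_self
      have hIoi : IntegrableOn (fun y => (ψ x y)^2) (Set.Ioi (-x)) := by
        rw [← Set.Ioc_union_Ioi_eq_Ioi hxx]
        exact P2'.union P3'
      have hint : Integrable (fun y => (ψ x y)^2) := by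
        rw [← integrableOn_univ, ← Set.Iic_union_Ioi (a := -x)]
        exact P1.union hIoi
      -- splitting
      have hsplit : ∫ y : ℝ, (ψ x y)^2
          = (∫ y in Set.Iic (-x), (ψ x y)^2)
            + ((∫ y in Set.Ioc (-x) x, (ψ x y)^2) + ∫ y in Set.Ioi x, (ψ x y)^2) := by
        rw [← setIntegral_univ, ← Set.Iic_union_Ioi (a := -x),
          setIntegral_union (Set.Iic_disjoint_Ioi le_rfl) measurableSet_Ioi P1 hIoi,
          ← Set.Ioc_union_Ioi_eq_Ioi hxx,
          setIntegral_union (Set.Ioc_disjoint_Ioi le_rfl) measurableSet_Ioi P2' P3']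
      -- piece bounds
      have I1le : (∫ y in Set.Iic (-x), (ψ x y)^2) ≤ 1 := by
        rw [setIntegral_congr_fun measurableSet_Iic hEq1, integral_const_mul, int_exp_Iic' h2l,
          ← mul_div_assoc, ← Real.exp_add, show 2*l*x + 2*l*(-x) = 0 by ring, Real.exp_zero]
        rw [div_le_one h2l]; linarith
      have I3le : (∫ y in Set.Ioi x, (ψ x y)^2) ≤ 1 := by
        rw [setIntegral_congr_fun measurableSet_Ioi (fun y hy => hEq3 (le_of_lt hy)),
          integral_const_mul, int_exp_Ioi' h2l,
          ← mul_div_assoc, ← Real.exp_add, show 2*l*x + -(2*l*x) = 0 by ring, Real.exp_zero]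
        rw [div_le_one h2l]; linarith
      have hIA : IntegrableOn (fun y => Real.exp (-(2*l*x)) * Real.exp ((2*l)*y))
          (Set.Ioc (-x) x) :=
        MeasureTheory.IntegrableOn.mono_set ((intOn_exp_Iic' h2l x).const_mul _)
          Set.Ioc_subset_Iic_self
      have hIB : IntegrableOn (fun y => Real.exp (-(2*l*x)) * Real.exp (-((2*l)*y)))
          (Set.Ioc (-x) x) :=
        MeasureTheory.IntegrableOn.mono_set ((intOn_exp_Ioi' h2l (-x)).const_mul _)
          Set.Ioc_subset_Ioi_self
      have hpt : ∀ y ∈ Set.Ioc (-x) x, (ψ x y)^2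
          ≤ 2 * (Real.exp (-(2*l*x)) * Real.exp ((2*l)*y))
              + 2 * (Real.exp (-(2*l*x)) * Real.exp (-((2*l)*y))) := by
        intro y hy
        have hg : (ψ x y)^2 = (Real.cosh (l*y)/Real.cosh (l*x))^2 :=
          hEq2 (Set.Ioc_subset_Icc_self hy)
        rw [hg]
        have h1 : Real.cosh (l*y)/Real.cosh (l*x)
            ≤ Real.exp (-(l*(x-y))) + Real.exp (-(l*(x+y))) := cosh_div_le l x y
        have h0 : (0:ℝ) ≤ Real.cosh (l*y)/Real.cosh (l*x) := by positivity
        have hsq : (Real.cosh (l*y)/Real.cosh (l*x))^2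
            ≤ (Real.exp (-(l*(x-y))) + Real.exp (-(l*(x+y))))^2 := by
          exact pow_le_pow_left₀ h0 h1 2
        have ea : (Real.exp (-(l*(x-y))))^2 = Real.exp (-(2*l*x)) * Real.exp ((2*l)*y) := by
          rw [sq, ← Real.exp_add, ← Real.exp_add]; congr 1; ring
        have eb : (Real.exp (-(l*(x+y))))^2 = Real.exp (-(2*l*x)) * Real.exp (-((2*l)*y)) := by
          rw [sq, ← Real.exp_add, ← Real.exp_add]; congr 1; ring
        nlinarith [sq_nonneg (Real.exp (-(l*(x-y))) - Real.exp (-(l*(x+y))))]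
      have IAle : (∫ y in Set.Ioc (-x) x, Real.exp (-(2*l*x)) * Real.exp ((2*l)*y)) ≤ 1 := by
        rw [integral_const_mul]
        have hmono : (∫ y in Set.Ioc (-x) x, Real.exp ((2*l)*y))
            ≤ ∫ y in Set.Iic x, Real.exp ((2*l)*y) :=
          setIntegral_mono_set (intOn_exp_Iic' h2l x)
            (Filter.Eventually.of_forall fun y => by positivity)
            (HasSubset.Subset.eventuallyLE Set.Ioc_subset_Iic_self)
        rw [int_exp_Iic' h2l] at hmono
        calc Real.exp (-(2*l*x)) * ∫ y in Set.Ioc (-x) x, Real.exp ((2*l)*y)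
            ≤ Real.exp (-(2*l*x)) * (Real.exp (2*l*x)/(2*l)) :=
              mul_le_mul_of_nonneg_left hmono (Real.exp_pos _).le
          _ = 1/(2*l) := by
              rw [← mul_div_assoc, ← Real.exp_add, show -(2*l*x) + 2*l*x = 0 by ring,
                Real.exp_zero]
          _ ≤ 1 := by rw [div_le_one h2l]; linarith
      have IBle : (∫ y in Set.Ioc (-x) x, Real.exp (-(2*l*x)) * Real.exp (-((2*l)*y))) ≤ 1 := by
        rw [integral_const_mul]
        have hmono : (∫ y in Set.Ioc (-x) x, Real.exp (-((2*l)*y)))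
            ≤ ∫ y in Set.Ioi (-x), Real.exp (-((2*l)*y)) :=
          setIntegral_mono_set (intOn_exp_Ioi' h2l (-x))
            (Filter.Eventually.of_forall fun y => by positivity)
            (HasSubset.Subset.eventuallyLE Set.Ioc_subset_Ioi_self)
        rw [int_exp_Ioi' h2l] at hmono
        calc Real.exp (-(2*l*x)) * ∫ y in Set.Ioc (-x) x, Real.exp (-((2*l)*y))
            ≤ Real.exp (-(2*l*x)) * (Real.exp (-(2*l*(-x)))/(2*l)) :=
              mul_le_mul_of_nonneg_left hmono (Real.exp_pos _).le
          _ = 1/(2*l) := by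
              rw [← mul_div_assoc, ← Real.exp_add, show -(2*l*x) + -(2*l*(-x)) = 0 by ring,
                Real.exp_zero]
          _ ≤ 1 := by rw [div_le_one h2l]; linarith
      have I2le : (∫ y in Set.Ioc (-x) x, (ψ x y)^2) ≤ 4 := by
        have step1 := setIntegral_mono_on P2' ((hIA.const_mul 2).add (hIB.const_mul 2))
          measurableSet_Ioc hpt
        simp only [Pi.add_apply] at step1
        rw [integral_add (hIA.const_mul 2) (hIB.const_mul 2)] at step1
        have e1 := integral_const_mul (μ := volume.restrict (Set.Ioc (-x) x)) (2:ℝ)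
          (fun y => Real.exp (-(2*l*x)) * Real.exp ((2*l)*y))
        have e2 := integral_const_mul (μ := volume.restrict (Set.Ioc (-x) x)) (2:ℝ)
          (fun y => Real.exp (-(2*l*x)) * Real.exp (-((2*l)*y)))
        rw [e1, e2] at step1
        linarith
      have hup : ∫ y : ℝ, (ψ x y)^2 ≤ 6 := by
        rw [hsplit]; linarith
      have hlow : Real.exp (-2 : ℝ) ≤ ∫ y : ℝ, (ψ x y)^2 := by
        have hsub : (∫ y in Set.Ioc x (x+1), (ψ x y)^2) ≤ ∫ y : ℝ, (ψ x y)^2 :=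
          setIntegral_le_integral hint (Filter.Eventually.of_forall fun y => by positivity)
        have hconst : Real.exp (-2 : ℝ) * (volume (Set.Ioc x (x+1))).toReal
            ≤ ∫ y in Set.Ioc x (x+1), (ψ x y)^2 := by
          refine setIntegral_ge_of_const_le_real measurableSet_Ioc ?_ ?_
            (P3.mono_set (fun y hy => le_of_lt hy.1))
          · rw [Real.volume_Ioc]; exact ENNReal.ofReal_ne_top
          · intro y hy
            obtain ⟨hy1, hy2⟩ := hy
            rw [hψ3 x hx y (le_of_lt hy1), sq, ← Real.exp_add]
            exact Real.exp_le_exp.mpr (by nlinarith)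
        rw [Real.volume_Ioc, show x + 1 - x = 1 by ring,
          ENNReal.toReal_ofReal zero_le_one, mul_one] at hconst
        linarith
      constructor
      · have h2 := Real.sqrt_le_sqrt hlow
        rwa [show Real.exp (-2:ℝ) = (Real.exp (-1))^2 by rw [sq, ← Real.exp_add]; norm_num,
          Real.sqrt_sq (Real.exp_pos _).le] at h2
      · have h9 : ∫ y : ℝ, (ψ x y)^2 ≤ 9 := by linarith
        have h2 := Real.sqrt_le_sqrt h9
        rwa [show (9:ℝ) = 3^2 by norm_num, Real.sqrt_sq (by norm_num : (0:ℝ) ≤ 3)] at h2
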